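/- Prefix-doubling recurrence: comparing suffixes i and j by their length-2h prefixes is equivalent to comparing the pairs (rank_h[i], rank_h[i+h]) and (rank_h[j], rank_h[j+h]) lexicographically, where rank_h of an out-of-range position (≥ n) is defined as −1 (smaller than all ranks). -/

import Mathlib

/-- The `h`-rank of suffix `i`: the number of positions `j` whose length-`h`
prefix of suffix `j` is lexicographically smaller than that of suffix `i`
(equal prefixes get equal ranks). -/
def hRank {α : Type*} [LinearOrder α] (n h : ℕ) (T : Fin n → α) (i : Fin n) : ℕ :=
  (Finset.univ.filter (fun j : Fin n =>
    List.Lex (· < ·) (((List.ofFn T).drop j).take h) (((List.ofFn T).drop i).take h))).card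

/-- `hRank` extended by `-1` for out-of-range positions. -/
def hRankInt {α : Type*} [LinearOrder α] (n h : ℕ) (T : Fin n → α) (i : ℕ) : ℤ :=
  if hi : i < n then (hRank n h T ⟨i, hi⟩ : ℤ) else -1

private lemma lex_cons_iff' {α : Type*} [LinearOrder α] {a c : α} {A C : List α} :
    List.Lex (· < ·) (a :: A) (c :: C) ↔ a < c ∨ (a = c ∧ List.Lex (· < ·) A C) := by
  constructor
  · rintro (h | h)
    · exact Or.inl ‹_›
    · exact Or.inr ⟨rfl, ‹_›⟩
  · rintro (h | ⟨rfl, h⟩)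
    · exact List.Lex.rel h
    · exact List.Lex.cons h

private lemma lex_append_split {α : Type*} [LinearOrder α] (A : List α) :
    ∀ (C B D : List α),
      (A.length < C.length → B = []) → (C.length < A.length → D = []) →
      (List.Lex (· < ·) (A ++ B) (C ++ D) ↔
        List.Lex (· < ·) A C ∨ (A = C ∧ List.Lex (· < ·) B D)) := by
  induction A with
  | nil =>
    intro C B D hB hD
    cases C with
    | nil =>
      simp only [List.nil_append]
      constructor
      · intro hx; exact Or.inr ⟨by trivial, hx⟩
      · rintro (hx | ⟨-, hx⟩)
        · exact absurd hx List.not_lex_nil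
        · exact hx
    | cons c C' =>
      rw [hB (by simp)]
      simp only [List.nil_append]
      constructor
      · intro _; exact Or.inl List.Lex.nil
      · intro _; exact List.Lex.nil
  | cons a A' ih =>
    intro C B D hB hD
    cases C with
    | nil =>
      rw [hD (by simp)]
      simp only [List.append_nil]
      constructor
      · intro hx; exact absurd hx List.not_lex_nil
      · rintro (hx | ⟨hx, _⟩)
        · exact absurd hx List.not_lex_nil
        · exact absurd hx (by simp)
    | cons c C' =>
      simp only [List.cons_append]
      rw [lex_cons_iff', lex_cons_iff',
        ih C' B D (fun hlt => hB (by simpa using Nat.succ_lt_succ hlt))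
                  (fun hlt => hD (by simpa using Nat.succ_lt_succ hlt))]
      constructor
      · rintro (h | ⟨rfl, (h | ⟨rfl, h⟩)⟩)
        · exact Or.inl (Or.inl h)
        · exact Or.inl (Or.inr ⟨rfl, h⟩)
        · exact Or.inr ⟨rfl, h⟩
      · rintro ((h | ⟨rfl, h⟩) | ⟨heq, h⟩)
        · exact Or.inl h
        · exact Or.inr ⟨rfl, Or.inl h⟩
        · injection heq with h1 h2; subst h1; subst h2
          exact Or.inr ⟨rfl, Or.inr ⟨rfl, h⟩⟩

private lemma lex_tri {α : Type*} [LinearOrder α] (A C : List α) :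
    List.Lex (· < ·) A C ∨ A = C ∨ List.Lex (· < ·) C A :=
  trichotomous_of (List.Lex (· < ·)) A C

private lemma rank_lt_of_lex {α : Type*} [LinearOrder α] (n h : ℕ) (T : Fin n → α)
    (i j : Fin n)
    (hij : List.Lex (· < ·) (((List.ofFn T).drop i).take h) (((List.ofFn T).drop j).take h)) :
    hRank n h T i < hRank n h T j := by
  unfold hRank
  apply Finset.card_lt_card
  rw [Finset.ssubset_iff_of_subset]
  · refine ⟨i, ?_, ?_⟩
    · simp only [Finset.mem_filter, Finset.mem_univ, true_and]
      exact hij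
    · simp only [Finset.mem_filter, Finset.mem_univ, true_and]
      exact irrefl_of (List.Lex (· < ·)) _
  · intro k hk
    simp only [Finset.mem_filter, Finset.mem_univ, true_and] at hk ⊢
    exact List.lex_trans lt_trans hk hij

private lemma rank_eq_of_eq {α : Type*} [LinearOrder α] (n h : ℕ) (T : Fin n → α)
    (i j : Fin n)
    (hij : ((List.ofFn T).drop i).take h = ((List.ofFn T).drop j).take h) :
    hRank n h T i = hRank n h T j := by
  unfold hRank
  rw [hij]

private lemma rank_lt_iff {α : Type*} [LinearOrder α] (n h : ℕ) (T : Fin n → α)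
    (i j : Fin n) :
    hRank n h T i < hRank n h T j ↔
      List.Lex (· < ·) (((List.ofFn T).drop i).take h) (((List.ofFn T).drop j).take h) := by
  constructor
  · intro hlt
    rcases lex_tri (((List.ofFn T).drop i).take h)
        (((List.ofFn T).drop j).take h) with hx | hx | hx
    · exact hx
    · exact absurd (rank_eq_of_eq n h T i j hx) (by omega)
    · exact absurd (rank_lt_of_lex n h T j i hx) (by omega)
  · exact rank_lt_of_lex n h T i j

private lemma rank_eq_iff {α : Type*} [LinearOrder α] (n h : ℕ) (T : Fin n → α)
    (i j : Fin n) :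
    hRank n h T i = hRank n h T j ↔
      ((List.ofFn T).drop i).take h = ((List.ofFn T).drop j).take h := by
  constructor
  · intro heq
    rcases lex_tri (((List.ofFn T).drop i).take h)
        (((List.ofFn T).drop j).take h) with hx | hx | hx
    · exact absurd (rank_lt_of_lex n h T i j hx) (by omega)
    · exact hx
    · exact absurd (rank_lt_of_lex n h T j i hx) (by omega)
  · exact rank_eq_of_eq n h T i j

/-- Prefix-doubling recurrence: comparing suffixes `i` and `j` by their
length-`2h` prefixes is equivalent to comparing the rank pairs
`(rank_h[i], rank_h[i+h])` and `(rank_h[j], rank_h[j+h])` lexicographically,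
where out-of-range ranks are `-1`. -/
theorem prefix_doubling_recurrence {α : Type*} [LinearOrder α] (n h : ℕ)
    (hh : 1 ≤ h) (hn : 0 < n) (T : Fin n → α)
    (hsent : ∀ i : Fin n, (i : ℕ) ≠ n - 1 → T ⟨n - 1, by omega⟩ < T i) :
    ∀ i j : Fin n,
      List.Lex (· < ·) (((List.ofFn T).drop i).take (2 * h))
          (((List.ofFn T).drop j).take (2 * h)) ↔
        (hRankInt n h T i < hRankInt n h T j ∨
          (hRankInt n h T i = hRankInt n h T j ∧
            hRankInt n h T (i + h) < hRankInt n h T (j + h))) := by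
  intro i j
  have hLlen : (List.ofFn T).length = n := List.length_ofFn (f := T)
  have hsplit : ∀ k : ℕ, ((List.ofFn T).drop k).take (2 * h) =
      ((List.ofFn T).drop k).take h ++ ((List.ofFn T).drop (k + h)).take h := by
    intro k
    rw [two_mul, List.take_add, List.drop_drop]
  have hPlen : ∀ k : ℕ, (((List.ofFn T).drop k).take h).length = min h (n - k) := by
    intro k; simp [hLlen]
  have hBnil : ∀ k : ℕ, ¬ k + h < n → ((List.ofFn T).drop (k + h)).take h = [] := by
    intro k hk
    rw [List.drop_eq_nil_of_le (by omega : (List.ofFn T).length ≤ k + h)]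
    simp
  have hshort : ∀ k : ℕ, (((List.ofFn T).drop k).take h).length < h → ¬ k + h < n := by
    intro k hk
    rw [hPlen] at hk
    intro hcon
    have : h ≤ n - k := by omega
    rw [Nat.min_eq_left this] at hk
    exact lt_irrefl _ hk
  -- three component equivalences
  have e1 : List.Lex (· < ·) (((List.ofFn T).drop (i : ℕ)).take h)
      (((List.ofFn T).drop (j : ℕ)).take h) ↔ hRankInt n h T i < hRankInt n h T j := by
    unfold hRankInt
    rw [dif_pos i.isLt, dif_pos j.isLt, Nat.cast_lt]
    simp only [Fin.eta]
    exact (rank_lt_iff n h T i j).symm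
  have e2 : (((List.ofFn T).drop (i : ℕ)).take h) = (((List.ofFn T).drop (j : ℕ)).take h) ↔
      hRankInt n h T i = hRankInt n h T j := by
    unfold hRankInt
    rw [dif_pos i.isLt, dif_pos j.isLt, Nat.cast_inj]
    simp only [Fin.eta]
    exact (rank_eq_iff n h T i j).symm
  have e3 : List.Lex (· < ·) (((List.ofFn T).drop ((i : ℕ) + h)).take h)
      (((List.ofFn T).drop ((j : ℕ) + h)).take h) ↔
      hRankInt n h T (i + h) < hRankInt n h T (j + h) := by
    unfold hRankInt
    by_cases hi2 : (i : ℕ) + h < n <;> by_cases hj2 : (j : ℕ) + h < n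
    · rw [dif_pos hi2, dif_pos hj2, Nat.cast_lt]
      exact (rank_lt_iff n h T ⟨_, hi2⟩ ⟨_, hj2⟩).symm
    · rw [hBnil j hj2, dif_pos hi2, dif_neg hj2]
      constructor
      · intro hx; exact absurd hx List.not_lex_nil
      · intro hx
        have : (0 : ℤ) ≤ (hRank n h T ⟨(i : ℕ) + h, hi2⟩ : ℤ) := Int.natCast_nonneg _
        omega
    · rw [hBnil i hi2, dif_neg hi2, dif_pos hj2]
      have hDne : ((List.ofFn T).drop ((j : ℕ) + h)).take h ≠ [] := by
        have : 0 < (((List.ofFn T).drop ((j : ℕ) + h)).take h).length := by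
          rw [hPlen]; omega
        exact List.ne_nil_of_length_pos this
      constructor
      · intro _
        have : (0 : ℤ) ≤ (hRank n h T ⟨(j : ℕ) + h, hj2⟩ : ℤ) := Int.natCast_nonneg _
        omega
      · intro _
        cases hD : ((List.ofFn T).drop ((j : ℕ) + h)).take h with
        | nil => exact absurd hD hDne
        | cons d D' => exact List.Lex.nil
    · rw [hBnil i hi2, hBnil j hj2, dif_neg hi2, dif_neg hj2]
      constructor
      · intro hx; exact absurd hx List.not_lex_nil
      · intro hx; omega
  rw [hsplit i, hsplit j,
    lex_append_split _ _ _ _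
      (fun hlt => hBnil i (hshort i (hlt.trans_le (by rw [hPlen]; exact Nat.min_le_left _ _))))
      (fun hlt => hBnil j (hshort j (hlt.trans_le (by rw [hPlen]; exact Nat.min_le_left _ _)))),
    e1, e2, e3]
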